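/- Let P(y) = Σ_{0≤h≤p} γ_h·y^h ∈ ℝ[y] with γ_p ≠ 0 and let θ₁, θ₂ ∈ ℝ. For i = 1,2 define η_i : {0,…,p} → {−1,0,1} by η_i(k) = sign(P^{(k)}(θ_i)) for 0 ≤ k ≤ p−1 and η_i(p) = sign(γ_p). Assume η₁ ≠ η₂ and let q be the largest k with η₁(k) ≠ η₂(k). Then for every k with q < k < p one has P^{(k)}(θ₁) ≠ 0 (equivalently, η₁(k) = η₂(k) ≠ 0): it is impossible that η₁(k) = η₂(k) = 0 for some k with q < k < p. -/
import Mathlib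


open Polynomial

private lemma mono_aux (c : ℝ) (f : Polynomial ℝ) (a b : ℝ)
    (h : ∀ x ∈ Set.Icc a b, 0 < c * (Polynomial.derivative f).eval x) :
    StrictMonoOn (fun x => c * f.eval x) (Set.Icc a b) := by
  apply strictMonoOn_of_deriv_pos (convex_Icc a b)
  · exact (continuous_const.mul f.continuous).continuousOn
  · intro x hx
    rw [interior_Icc] at hx
    have hd : deriv (fun x => c * f.eval x) x = c * (Polynomial.derivative f).eval x := by
      rw [deriv_const_mul _ (f.differentiable.differentiableAt), Polynomial.deriv]
    rw [hd]
    exact h x (Set.Ioo_subset_Icc_self hx)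

private lemma aux_contra (P : Polynomial ℝ) (p m : ℕ) (hmp : m < p)
    (c : ℝ) (hc : c ≠ 0) (hCp : Polynomial.derivative^[p] P = Polynomial.C c)
    (a b : ℝ) (hab : a < b)
    (hnz : ∀ j, m < j → j < p → (Polynomial.derivative^[j] P).eval a ≠ 0)
    (hsame : ∀ j, m < j → j < p →
      SignType.sign ((Polynomial.derivative^[j] P).eval a)
        = SignType.sign ((Polynomial.derivative^[j] P).eval b))
    (hza : (Polynomial.derivative^[m] P).eval a = 0)
    (hzb : (Polynomial.derivative^[m] P).eval b = 0) : False := by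
  have hamem : a ∈ Set.Icc a b := Set.left_mem_Icc.mpr hab.le
  have hbmem : b ∈ Set.Icc a b := Set.right_mem_Icc.mpr hab.le
  -- the key monotonicity step
  have hstep : ∀ j, m ≤ j → j < p →
      (∀ x ∈ Set.Icc a b,
        0 < (Polynomial.derivative^[j+1] P).eval x * (Polynomial.derivative^[j+1] P).eval a) →
      StrictMonoOn
        (fun x => (Polynomial.derivative^[j+1] P).eval a * (Polynomial.derivative^[j] P).eval x)
        (Set.Icc a b) := by
    intro j _ _ hQ1
    apply mono_aux
    intro x hx
    rw [← Function.iterate_succ_apply' Polynomial.derivative j P]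
    have := hQ1 x hx
    linarith [this]
  -- propagate positivity downwards
  have hQ : ∀ d : ℕ, m < p - d → ∀ x ∈ Set.Icc a b,
      0 < (Polynomial.derivative^[p - d] P).eval x * (Polynomial.derivative^[p - d] P).eval a := by
    intro d
    induction d with
    | zero =>
      intro _ x _
      simp only [Nat.sub_zero, hCp, Polynomial.eval_C]
      exact mul_self_pos.mpr hc
    | succ d ih =>
      intro hmd x hx
      have hj1 : p - d = (p - (d + 1)) + 1 := by omega
      have hjp : p - (d + 1) < p := by omega
      rw [hj1] at ih
      have hQ1 := ih (by omega)
      set j := p - (d + 1) with hj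
      set c₁ := (Polynomial.derivative^[j + 1] P).eval a with hc₁def
      have hc₁ : c₁ ≠ 0 := by
        intro h
        have := hQ1 a hamem
        rw [← hc₁def, h, mul_zero] at this
        exact lt_irrefl 0 this
      have hmono := hstep j (by omega) hjp hQ1
      have hfa : (Polynomial.derivative^[j] P).eval a ≠ 0 := hnz j (by omega) hjp
      have hga : c₁ * (Polynomial.derivative^[j] P).eval a ≠ 0 := mul_ne_zero hc₁ hfa
      have hsg : SignType.sign (c₁ * (Polynomial.derivative^[j] P).eval a)
          = SignType.sign (c₁ * (Polynomial.derivative^[j] P).eval b) := by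
        rw [sign_mul, sign_mul, hsame j (by omega) hjp]
      have hc2 : 0 < c₁ * c₁ := mul_self_pos.mpr hc₁
      rcases hga.lt_or_gt with hneg | hpos
      · -- c₁ * f a < 0 : use that values stay ≤ c₁ * f b < 0
        have hgb : c₁ * (Polynomial.derivative^[j] P).eval b < 0 := by
          have := hsg
          rw [sign_eq_neg_one_iff.mpr hneg] at this
          exact sign_eq_neg_one_iff.mp this.symm
        have hgx : c₁ * (Polynomial.derivative^[j] P).eval x < 0 :=
          lt_of_le_of_lt (hmono.monotoneOn hx hbmem hx.2) hgb
        nlinarith [mul_pos_of_neg_of_neg hgx hneg, hc2]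
      · -- 0 < c₁ * f a : values stay ≥ c₁ * f a > 0
        have hgx : 0 < c₁ * (Polynomial.derivative^[j] P).eval x :=
          lt_of_lt_of_le hpos (hmono.monotoneOn hamem hx hx.1)
        nlinarith [mul_pos hgx hpos, hc2]
  -- final contradiction at level m
  have hQm : ∀ x ∈ Set.Icc a b,
      0 < (Polynomial.derivative^[m + 1] P).eval x * (Polynomial.derivative^[m + 1] P).eval a := by
    have he : p - (p - (m + 1)) = m + 1 := by omega
    have := hQ (p - (m + 1)) (by omega)
    rwa [he] at this
  have hmono := hstep m le_rfl hmp hQm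
  have := hmono hamem hbmem hab
  simp only [hza, hzb, mul_zero] at this
  exact lt_irrefl 0 this

/-- Claim following Proposition `lemma_order_thom_encoding`: with `η₁, η₂`
the extended Thom encodings of `θ₁, θ₂` with respect to `P` and `q` the
largest index of disagreement, it is impossible that `η₁ k = η₂ k = 0` for
some `q < k < p`; equivalently `P^{(k)}(θ₁) ≠ 0` for all `q < k < p`. -/
theorem thom_encoding_no_common_zero_above (p : ℕ) (P : Polynomial ℝ)
    (hdeg : P.natDegree ≤ p) (hlc : P.coeff p ≠ 0)
    (θ₁ θ₂ : ℝ) (η₁ η₂ : ℕ → SignType)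
    (hη₁ : ∀ k ≤ p, η₁ k =
      if k = p then SignType.sign (P.coeff p)
      else SignType.sign ((Polynomial.derivative^[k] P).eval θ₁))
    (hη₂ : ∀ k ≤ p, η₂ k =
      if k = p then SignType.sign (P.coeff p)
      else SignType.sign ((Polynomial.derivative^[k] P).eval θ₂))
    (q : ℕ)
    (hne : η₁ q ≠ η₂ q)
    (hmax : ∀ k, q < k → k ≤ p → η₁ k = η₂ k) :
    ∀ k, q < k → k < p → (Polynomial.derivative^[k] P).eval θ₁ ≠ 0 := by
  classical
  intro k hqk hkp h0
  have hqp : q < p := hqk.trans hkp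
  -- signs of intermediate derivatives agree
  have hsign : ∀ j, q < j → j < p →
      SignType.sign ((Polynomial.derivative^[j] P).eval θ₁)
        = SignType.sign ((Polynomial.derivative^[j] P).eval θ₂) := by
    intro j hj hjp
    have h := hmax j hj hjp.le
    rwa [hη₁ j hjp.le, hη₂ j hjp.le, if_neg hjp.ne, if_neg hjp.ne] at h
  -- θ₁ ≠ θ₂
  have hth : θ₁ ≠ θ₂ := by
    intro h
    exact hne (by rw [hη₁ q hqp.le, hη₂ q hqp.le, h])
  -- zeros transfer between θ₁ and θ₂
  have hzero12 : ∀ j, q < j → j < p → (Polynomial.derivative^[j] P).eval θ₁ = 0 →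
      (Polynomial.derivative^[j] P).eval θ₂ = 0 := by
    intro j hj hjp hz
    have h := hsign j hj hjp
    rw [hz, sign_zero] at h
    exact sign_eq_zero_iff.mp h.symm
  have hzero21 : ∀ j, q < j → j < p → (Polynomial.derivative^[j] P).eval θ₂ = 0 →
      (Polynomial.derivative^[j] P).eval θ₁ = 0 := by
    intro j hj hjp hz
    have h := hsign j hj hjp
    rw [hz, sign_zero] at h
    exact sign_eq_zero_iff.mp h
  -- the p-th iterated derivative is a nonzero constant
  set c : ℝ := (Polynomial.derivative^[p] P).coeff 0 with hcdef
  have hCp : Polynomial.derivative^[p] P = Polynomial.C c := by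
    apply Polynomial.eq_C_of_natDegree_eq_zero
    have h1 := Polynomial.natDegree_iterate_derivative P p
    omega
  have hc : c ≠ 0 := by
    rw [hcdef, Polynomial.coeff_iterate_derivative, zero_add, Nat.descFactorial_self,
      nsmul_eq_mul]
    exact mul_ne_zero (by exact_mod_cast Nat.factorial_ne_zero p) hlc
  -- largest index with a common zero
  set Pr : ℕ → Prop := fun j => q < j ∧ j < p ∧ (Polynomial.derivative^[j] P).eval θ₁ = 0
    with hPrdef
  set m := Nat.findGreatest Pr p with hm
  have hPm : Pr m := Nat.findGreatest_spec (n := p) hkp.le ⟨hqk, hkp, h0⟩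
  obtain ⟨hqm, hmp, hzm⟩ := hPm
  have hnz : ∀ j, m < j → j < p → (Polynomial.derivative^[j] P).eval θ₁ ≠ 0 := by
    intro j hmj hjp hz
    exact Nat.findGreatest_is_greatest hmj hjp.le ⟨hqm.trans hmj, hjp, hz⟩
  have hzm2 : (Polynomial.derivative^[m] P).eval θ₂ = 0 := hzero12 m hqm hmp hzm
  rcases hth.lt_or_gt with hlt | hlt
  · exact aux_contra P p m hmp c hc hCp θ₁ θ₂ hlt hnz
      (fun j hmj hjp => hsign j (hqm.trans hmj) hjp) hzm hzm2
  · refine aux_contra P p m hmp c hc hCp θ₂ θ₁ hlt ?_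
      (fun j hmj hjp => (hsign j (hqm.trans hmj) hjp).symm) hzm2 hzm
    intro j hmj hjp hz
    exact hnz j hmj hjp (hzero21 j (hqm.trans hmj) hjp hz)
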